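/- arXiv:2206.05043 — 2 statements merged into one kernel-verified Lean document; each statement's English description precedes it below -/
import Mathlib

section
/- There exists a constant K > 0 such that for every n ≥ 2 and every probability mass function p on Fin n, if g : Fin n → Fin n is a random p-mapping (the values g(i) chosen independently according to p for each i), then the probability that g has more than 2·√(n · log n) cyclic points, or that g has height greater than 2·√(n · log n), is at most K/n. -/
/-- A state `s` is a cyclic point of `f` if some positive iterate of `f` fixes `s`. -/
def IsCyclicPt {Q : Type*} (f : Q → Q) (s : Q) : Prop :=
  ∃ i : ℕ, 0 < i ∧ f^[i] s = s

/-- The height of a state `T` under `f`: the smallest `i ≥ 0` such that `f^[i] T`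
is a cyclic point of `f`. -/
noncomputable def stateHeight {Q : Type*} (f : Q → Q) (T : Q) : ℕ :=
  sInf {i : ℕ | IsCyclicPt f (f^[i] T)}

/-- The height of `f`: the maximum of the heights of all states. -/
noncomputable def funcHeight {Q : Type*} [Fintype Q] (f : Q → Q) : ℕ :=
  Finset.univ.sup (stateHeight f)

namespace RPM
open Finset Function
open scoped Classical


variable {n : ℕ}

noncomputable def Ek (p : Fin n → ℝ) (k : ℕ) : ℝ :=
  ∑ A ∈ Finset.powersetCard k Finset.univ, ∏ a ∈ A, p a

noncomputable def Eh (p : Fin n → ℝ) (i : Fin n) (k : ℕ) : ℝ :=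
  ∑ A ∈ Finset.powersetCard k (Finset.univ.erase i), ∏ a ∈ A, p a

variable {p : Fin n → ℝ}

lemma Ek_nonneg (hp0 : ∀ i, 0 ≤ p i) (k : ℕ) : 0 ≤ Ek p k :=
  Finset.sum_nonneg fun A _ => Finset.prod_nonneg fun a _ => hp0 a

lemma Eh_nonneg (hp0 : ∀ i, 0 ≤ p i) (i : Fin n) (k : ℕ) : 0 ≤ Eh p i k :=
  Finset.sum_nonneg fun A _ => Finset.prod_nonneg fun a _ => hp0 a

lemma sum_pC_insert (s : Finset (Fin n)) {j : Fin n} (hj : j ∉ s) (k : ℕ) :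
    ∑ A ∈ Finset.powersetCard (k+1) (insert j s), ∏ a ∈ A, p a
      = (∑ A ∈ Finset.powersetCard (k+1) s, ∏ a ∈ A, p a)
        + p j * ∑ A ∈ Finset.powersetCard k s, ∏ a ∈ A, p a := by
  classical
  rw [Finset.powersetCard_succ_insert hj, Finset.sum_union, Finset.sum_image, Finset.mul_sum]
  · congr 1
    refine Finset.sum_congr rfl fun A hA => ?_
    have hjA : j ∉ A := fun h => hj ((Finset.mem_powersetCard.1 hA).1 h)
    rw [Finset.prod_insert hjA]
  · intro A hA B hB hAB
    have hjA : j ∉ A := fun h => hj ((Finset.mem_powersetCard.1 hA).1 h)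
    have hjB : j ∉ B := fun h => hj ((Finset.mem_powersetCard.1 hB).1 h)
    rw [← Finset.erase_insert hjA, ← Finset.erase_insert hjB, hAB]
  · rw [Finset.disjoint_right]
    intro A hA hA'
    obtain ⟨B, hB, rfl⟩ := Finset.mem_image.1 hA
    exact (fun h => h (Finset.mem_insert_self _ _))
      (fun h => hj ((Finset.mem_powersetCard.1 hA').1 h))

lemma key_identity (k : ℕ) :
    (k + 1 : ℝ) * Ek p (k+1) = ∑ i, p i * Eh p i k := by
  classical
  have LHS : (k + 1 : ℝ) * Ek p (k+1)
      = ∑ B ∈ Finset.powersetCard (k+1) (Finset.univ : Finset (Fin n)),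
          ∑ i ∈ B, p i * ∏ a ∈ B.erase i, p a := by
    rw [Ek, Finset.mul_sum]
    refine Finset.sum_congr rfl fun B hB => ?_
    have hcard : B.card = k + 1 := (Finset.mem_powersetCard.1 hB).2
    have : ∀ i ∈ B, p i * ∏ a ∈ B.erase i, p a = ∏ a ∈ B, p a := fun i hi =>
      Finset.mul_prod_erase B p hi
    rw [Finset.sum_congr rfl this, Finset.sum_const, hcard, nsmul_eq_mul]
    push_cast
    ring
  have RHS : (∑ i, p i * Eh p i k)
      = ∑ i : Fin n, ∑ A ∈ Finset.powersetCard k (Finset.univ.erase i),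
          p i * ∏ a ∈ A, p a := by
    refine Finset.sum_congr rfl fun i _ => ?_
    rw [Eh, Finset.mul_sum]
  rw [LHS, RHS, Finset.sum_sigma', Finset.sum_sigma']
  refine Finset.sum_nbij' (fun x => ⟨x.2, x.1.erase x.2⟩) (fun x => ⟨insert x.1 x.2, x.1⟩)
    ?_ ?_ ?_ ?_ ?_
  · rintro ⟨B, i⟩ hx
    simp only [Finset.mem_sigma] at hx ⊢
    obtain ⟨hB, hi⟩ := hx
    obtain ⟨-, hcard⟩ := Finset.mem_powersetCard.1 hB
    refine ⟨Finset.mem_univ _, Finset.mem_powersetCard.2 ⟨?_, ?_⟩⟩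
    · intro a ha
      exact Finset.mem_erase.2 ⟨(Finset.mem_erase.1 ha).1, Finset.mem_univ _⟩
    · rw [Finset.card_erase_of_mem hi, hcard]
      omega
  · rintro ⟨i, A⟩ hx
    simp only [Finset.mem_sigma] at hx ⊢
    obtain ⟨-, hA⟩ := hx
    obtain ⟨hsub, hcard⟩ := Finset.mem_powersetCard.1 hA
    have hiA : i ∉ A := fun h => (Finset.mem_erase.1 (hsub h)).1 rfl
    refine ⟨Finset.mem_powersetCard.2 ⟨fun a _ => Finset.mem_univ _, ?_⟩,
      Finset.mem_insert_self _ _⟩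
    rw [Finset.card_insert_of_notMem hiA, hcard]
  · rintro ⟨B, i⟩ hx
    simp only [Finset.mem_sigma] at hx
    simp [Finset.insert_erase hx.2]
  · rintro ⟨i, A⟩ hx
    simp only [Finset.mem_sigma] at hx
    obtain ⟨-, hA⟩ := hx
    have hiA : i ∉ A := fun h => (Finset.mem_erase.1 ((Finset.mem_powersetCard.1 hA).1 h)).1 rfl
    simp [Finset.erase_insert hiA]
  · rintro ⟨B, i⟩ _
    rfl

lemma Ek_zero : Ek p 0 = 1 := by
  simp [Ek]

lemma Eh_zero (i : Fin n) : Eh p i 0 = 1 := by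
  simp [Eh]

lemma Eh_le_Ek (hp0 : ∀ i, 0 ≤ p i) (i : Fin n) (k : ℕ) : Eh p i k ≤ Ek p k := by
  refine Finset.sum_le_sum_of_subset_of_nonneg
    (Finset.powersetCard_mono (Finset.erase_subset _ _)) fun A _ _ =>
    Finset.prod_nonneg fun a _ => hp0 a

lemma swap_mono (hp0 : ∀ i, 0 ≤ p i) (k : ℕ) {i j : Fin n} (hij : i ≠ j)
    (hle : p j ≤ p i) : p j * Eh p j k ≤ p i * Eh p i k := by
  cases k with
  | zero => simpa [Eh_zero] using hle
  | succ k =>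
    have hji : j ≠ i := hij.symm
    have hjmem : j ∈ Finset.univ.erase i := Finset.mem_erase.2 ⟨hji, Finset.mem_univ _⟩
    have himem : i ∈ Finset.univ.erase j := Finset.mem_erase.2 ⟨hij, Finset.mem_univ _⟩
    have e1 : (Finset.univ.erase i) = insert j ((Finset.univ.erase i).erase j) :=
      (Finset.insert_erase hjmem).symm
    have e2 : (Finset.univ.erase j) = insert i ((Finset.univ.erase j).erase i) :=
      (Finset.insert_erase himem).symm
    have comm : ((Finset.univ.erase i).erase j) = ((Finset.univ.erase j).erase i) :=
      Finset.erase_right_comm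
    set s : Finset (Fin n) := (Finset.univ.erase i).erase j with hs
    have hjs : j ∉ s := Finset.notMem_erase _ _
    have his : i ∉ s := by
      rw [comm]; exact Finset.notMem_erase _ _
    have d1 : Eh p i (k+1)
        = (∑ A ∈ Finset.powersetCard (k+1) s, ∏ a ∈ A, p a)
          + p j * ∑ A ∈ Finset.powersetCard k s, ∏ a ∈ A, p a := by
      rw [Eh, e1]; exact sum_pC_insert s hjs k
    have d2 : Eh p j (k+1)
        = (∑ A ∈ Finset.powersetCard (k+1) s, ∏ a ∈ A, p a)
          + p i * ∑ A ∈ Finset.powersetCard k s, ∏ a ∈ A, p a := by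
      rw [Eh, e2, ← comm]; exact sum_pC_insert s his k
    have hQ : 0 ≤ ∑ A ∈ Finset.powersetCard (k+1) s, ∏ a ∈ A, p a :=
      Finset.sum_nonneg fun A _ => Finset.prod_nonneg fun a _ => hp0 a
    have hR : 0 ≤ ∑ A ∈ Finset.powersetCard k s, ∏ a ∈ A, p a :=
      Finset.sum_nonneg fun A _ => Finset.prod_nonneg fun a _ => hp0 a
    rw [d1, d2]
    nlinarith [hp0 i, hp0 j]

lemma chebyshev_step (hp0 : ∀ i, 0 ≤ p i) (hp1 : ∑ i, p i = 1) (k : ℕ) :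
    (∑ i, p i * Eh p i k) / n ≤ ∑ i, p i * (p i * Eh p i k) := by
  have hmono : MonovaryOn p (fun i => p i * Eh p i k) (Finset.univ : Finset (Fin n)) := by
    intro i _ j _ hgij
    by_contra hpc
    push_neg at hpc
    exact absurd (swap_mono hp0 k (fun h => lt_irrefl _ (h ▸ hgij)) hpc.le)
      (not_le.2 hgij)
  have H := hmono.sum_mul_sum_le_card_mul_sum
  simp only [Finset.card_univ, Fintype.card_fin, hp1, one_mul] at H
  rcases Nat.eq_zero_or_pos n with h0 | hpos
  · subst h0; simp
  · rw [div_le_iff₀ (by positivity)]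
    calc (∑ i, p i * Eh p i k) ≤ (n:ℝ) * ∑ i, p i * (p i * Eh p i k) := H
    _ = (∑ i, p i * (p i * Eh p i k)) * n := by ring

lemma Ek_decomp (i : Fin n) (k : ℕ) :
    Ek p (k+1) = Eh p i (k+1) + p i * Eh p i k := by
  have h : (Finset.univ : Finset (Fin n)) = insert i (Finset.univ.erase i) :=
    (Finset.insert_erase (Finset.mem_univ i)).symm
  rw [Ek, h]
  exact sum_pC_insert _ (Finset.notMem_erase _ _) k

lemma step (hp0 : ∀ i, 0 ≤ p i) (hp1 : ∑ i, p i = 1) {k : ℕ} (hk : k + 1 ≤ n) :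
    (k + 1 : ℝ) * Ek p (k+1) ≤ (1 - (k:ℝ)/n) * Ek p k := by
  have hn : (0:ℝ) < n := by exact_mod_cast Nat.lt_of_lt_of_le (Nat.succ_pos k) hk
  cases k with
  | zero =>
    have h1 : (1:ℝ) * Ek p 1 = ∑ i, p i * Eh p i 0 := by
      have := key_identity (p := p) 0; push_cast at this; simpa using this
    simp only [Eh_zero, mul_one] at h1
    push_cast
    rw [zero_add, h1, hp1]
    simp [Ek_zero]
  | succ k =>
    have hid : ((k:ℝ) + 2) * Ek p (k+2) = ∑ i, p i * Eh p i (k+1) := by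
      have h := key_identity (p := p) (k+1)
      push_cast at h
      convert h using 2
      ring
    have hid' : ((k:ℝ) + 1) * Ek p (k+1) = ∑ i, p i * Eh p i k := key_identity (p := p) k
    have hdec : ∀ i, Eh p i (k+1) = Ek p (k+1) - p i * Eh p i k := by
      intro i; have := Ek_decomp (p := p) i k; linarith
    have hsum : ∑ i, p i * Eh p i (k+1)
        = Ek p (k+1) - ∑ i, p i * (p i * Eh p i k) := by
      have he : ∀ i ∈ Finset.univ, p i * Eh p i (k+1)
          = p i * Ek p (k+1) - p i * (p i * Eh p i k) := by
        intro i _; rw [hdec i]; ring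
      rw [Finset.sum_congr rfl he, Finset.sum_sub_distrib, ← Finset.sum_mul, hp1, one_mul]
    have cheb := chebyshev_step hp0 hp1 k
    rw [← hid'] at cheb
    have hring : (1 - ((k:ℝ)+1)/n) * Ek p (k+1)
        = Ek p (k+1) - (((k:ℝ)+1) * Ek p (k+1))/n := by ring
    push_cast
    calc ((k:ℝ) + 1 + 1) * Ek p (k + 1 + 1)
        = ((k:ℝ) + 2) * Ek p (k+2) := by ring_nf
      _ = Ek p (k+1) - ∑ i, p i * (p i * Eh p i k) := by rw [hid, hsum]
      _ ≤ Ek p (k+1) - (((k:ℝ)+1) * Ek p (k+1))/n := by linarith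
      _ = (1 - ((k:ℝ)+1)/n) * Ek p (k+1) := hring.symm

lemma maclaurin (hp0 : ∀ i, 0 ≤ p i) (hp1 : ∑ i, p i = 1) :
    ∀ k, k ≤ n → (k.factorial : ℝ) * Ek p k ≤ ∏ i ∈ Finset.range k, (1 - (i:ℝ)/n) := by
  intro k
  induction k with
  | zero => simp [Ek_zero]
  | succ k ih =>
    intro hk
    have hkn : k ≤ n := Nat.le_of_succ_le hk
    have hn : (0:ℝ) < n := by exact_mod_cast Nat.lt_of_lt_of_le (Nat.succ_pos k) hk
    have hcoef : (0:ℝ) ≤ 1 - (k:ℝ)/n := by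
      rw [sub_nonneg, div_le_one hn]
      exact_mod_cast (Nat.lt_of_succ_le hk).le
    have hstep := step hp0 hp1 (k := k) hk
    have hfact : ((k+1).factorial : ℝ) = ((k:ℝ)+1) * (k.factorial : ℝ) := by
      rw [Nat.factorial_succ]; push_cast; ring
    rw [Finset.prod_range_succ, hfact]
    calc ((k:ℝ)+1) * (k.factorial : ℝ) * Ek p (k+1)
        = (k.factorial : ℝ) * (((k:ℝ)+1) * Ek p (k+1)) := by ring
      _ ≤ (k.factorial : ℝ) * ((1 - (k:ℝ)/n) * Ek p k) := by
          refine mul_le_mul_of_nonneg_left hstep (by positivity)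
      _ = (1 - (k:ℝ)/n) * ((k.factorial : ℝ) * Ek p k) := by ring
      _ ≤ (1 - (k:ℝ)/n) * ∏ i ∈ Finset.range k, (1 - (i:ℝ)/n) :=
          mul_le_mul_of_nonneg_left (ih hkn) hcoef
      _ = (∏ i ∈ Finset.range k, (1 - (i:ℝ)/n)) * (1 - (k:ℝ)/n) := by ring

lemma fact_Ek_succ_le (hp0 : ∀ i, 0 ≤ p i) (hp1 : ∑ i, p i = 1) (k : ℕ) :
    (((k+1).factorial : ℕ) : ℝ) * Ek p (k+1) ≤ ((k.factorial : ℕ) : ℝ) * Ek p k := by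
  have h1 : ((k:ℝ) + 1) * Ek p (k+1) = ∑ i, p i * Eh p i k := key_identity (p := p) k
  have h2 : ∑ i, p i * Eh p i k ≤ ∑ i, p i * Ek p k :=
    Finset.sum_le_sum fun i _ => mul_le_mul_of_nonneg_left (Eh_le_Ek hp0 i k) (hp0 i)
  have h3 : ∑ i, p i * Ek p k = Ek p k := by rw [← Finset.sum_mul, hp1, one_mul]
  have h4 : ((k:ℝ)+1) * Ek p (k+1) ≤ Ek p k := by rw [h1]; linarith
  have hEk1 : 0 ≤ Ek p (k+1) := Ek_nonneg hp0 (k+1)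
  have hfact : (((k+1).factorial : ℕ) : ℝ) = (k.factorial : ℝ) * ((k:ℝ)+1) := by
    rw [Nat.factorial_succ]; push_cast; ring
  have hf : (0:ℝ) ≤ (k.factorial : ℝ) := by positivity
  calc (((k+1).factorial : ℕ) : ℝ) * Ek p (k+1)
      = (k.factorial : ℝ) * (((k:ℝ)+1) * Ek p (k+1)) := by rw [hfact]; ring
    _ ≤ (k.factorial : ℝ) * Ek p k := mul_le_mul_of_nonneg_left h4 hf

lemma fact_Ek_anti (hp0 : ∀ i, 0 ≤ p i) (hp1 : ∑ i, p i = 1) {j k : ℕ} (hjk : j ≤ k) :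
    ((k.factorial : ℕ) : ℝ) * Ek p k ≤ ((j.factorial : ℕ) : ℝ) * Ek p j := by
  induction k with
  | zero => simp_all
  | succ k ih =>
    rcases Nat.lt_or_ge j (k+1) with h | h
    · exact le_trans (fact_Ek_succ_le hp0 hp1 k) (ih (Nat.lt_succ_iff.1 h))
    · have hj : j = k+1 := le_antisymm hjk h
      subst hj
      rfl

noncomputable def Sk (p : Fin n → ℝ) (k : ℕ) : ℝ :=
  ∑ u ∈ Finset.univ.filter (fun u : Fin k → Fin n => Function.Injective u), ∏ i, p (u i)

lemma Sk_nonneg (hp0 : ∀ i, 0 ≤ p i) (k : ℕ) : 0 ≤ Sk p k :=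
  Finset.sum_nonneg fun u _ => Finset.prod_nonneg fun i _ => hp0 (u i)

lemma Sk_le (hp0 : ∀ i, 0 ≤ p i) (k : ℕ) : Sk p k ≤ (k.factorial : ℝ) * Ek p k := by
  classical
  have hmap : ∀ u ∈ Finset.univ.filter (fun u : Fin k → Fin n => Function.Injective u),
      Finset.image u Finset.univ ∈ Finset.powersetCard k (Finset.univ : Finset (Fin n)) := by
    intro u hu
    rw [Finset.mem_filter] at hu
    exact Finset.mem_powersetCard.2 ⟨Finset.subset_univ _, by
      rw [Finset.card_image_of_injective _ hu.2, Finset.card_univ, Fintype.card_fin]⟩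
  rw [Sk, ← Finset.sum_fiberwise_of_maps_to hmap, Ek, Finset.mul_sum]
  refine Finset.sum_le_sum fun A hA => ?_
  obtain ⟨hAsub, hAcard⟩ := Finset.mem_powersetCard.1 hA
  set fib := (Finset.univ.filter (fun u : Fin k → Fin n => Function.Injective u)).filter
    (fun u => Finset.image u Finset.univ = A) with hfib
  have hterm : ∀ u ∈ fib, ∏ i, p (u i) = ∏ a ∈ A, p a := by
    intro u hu
    simp only [hfib, Finset.mem_filter] at hu
    obtain ⟨⟨-, hinj⟩, himg⟩ := hu
    rw [← himg, Finset.prod_image fun x _ y _ h => hinj h]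
  rw [Finset.sum_congr rfl hterm, Finset.sum_const, nsmul_eq_mul]
  have hprod : 0 ≤ ∏ a ∈ A, p a := Finset.prod_nonneg fun a _ => hp0 a
  refine mul_le_mul_of_nonneg_right ?_ hprod
  rcases Finset.eq_empty_or_nonempty fib with he | ⟨u₀, hu₀⟩
  · rw [he]
    simp
  · -- fib is nonempty; build injection into embeddings Fin k ↪ A
    have hu₀' := hu₀
    simp only [hfib, Finset.mem_filter] at hu₀'
    obtain ⟨⟨-, hinj₀⟩, himg₀⟩ := hu₀'
    have hmem₀ : ∀ i, u₀ i ∈ A := fun i => himg₀ ▸ Finset.mem_image_of_mem _ (Finset.mem_univ i)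
    have hne : Nonempty (Fin k ↪ {a // a ∈ A}) :=
      ⟨⟨fun i => ⟨u₀ i, hmem₀ i⟩, fun a b hab => hinj₀ (congrArg Subtype.val hab)⟩⟩
    set F : (Fin k → Fin n) → (Fin k ↪ {a // a ∈ A}) := fun u =>
      if h : Function.Injective u ∧ ∀ i, u i ∈ A then
        ⟨fun i => ⟨u i, h.2 i⟩, fun a b hab => h.1 (congrArg Subtype.val hab)⟩
      else Classical.choice hne with hF
    have hgood : ∀ u ∈ fib, Function.Injective u ∧ ∀ i, u i ∈ A := by
      intro u hu
      simp only [hfib, Finset.mem_filter] at hu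
      exact ⟨hu.1.2, fun i => hu.2 ▸ Finset.mem_image_of_mem _ (Finset.mem_univ i)⟩
    have hinjF : Set.InjOn F ↑fib := by
      intro a ha b hb hab
      have hga := hgood a ha
      have hgb := hgood b hb
      rw [hF] at hab
      simp only [dif_pos hga, dif_pos hgb] at hab
      funext i
      have := congrFun (congrArg (fun (e : Fin k ↪ {a // a ∈ A}) => (e : Fin k → {a // a ∈ A})) hab) i
      exact congrArg Subtype.val this
    have hcard : fib.card ≤ (Finset.univ : Finset (Fin k ↪ {a // a ∈ A})).card :=
      Finset.card_le_card_of_injOn F (fun u _ => Finset.mem_univ _) hinjF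
    rw [Finset.card_univ, Fintype.card_embedding_eq] at hcard
    simp only [Fintype.card_coe, hAcard, Fintype.card_fin, Nat.descFactorial_self] at hcard
    exact_mod_cast hcard

lemma cyl (hp1 : ∑ i, p i = 1) (A : Finset (Fin n)) (φ : Fin n → Fin n) :
    ∑ g ∈ Finset.univ.filter (fun g : Fin n → Fin n => ∀ a ∈ A, g a = φ a), ∏ i, p (g i)
      = ∏ a ∈ A, p (φ a) := by
  classical
  set f : Fin n → Fin n → ℝ :=
    fun i j => if i ∈ A then (if j = φ i then p j else 0) else p j with hf
  have key : ∀ g : Fin n → Fin n,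
      (∏ i, f i (g i)) = if (∀ a ∈ A, g a = φ a) then ∏ i, p (g i) else 0 := by
    intro g
    by_cases h : ∀ a ∈ A, g a = φ a
    · rw [if_pos h]
      refine Finset.prod_congr rfl fun i _ => ?_
      by_cases hiA : i ∈ A
      · simp only [hf, if_pos hiA, if_pos (h i hiA)]
      · simp only [hf, if_neg hiA]
    · rw [if_neg h]
      push_neg at h
      obtain ⟨a, haA, hne⟩ := h
      refine Finset.prod_eq_zero (Finset.mem_univ a) ?_
      simp only [hf, if_pos haA, if_neg hne]
  calc ∑ g ∈ Finset.univ.filter (fun g : Fin n → Fin n => ∀ a ∈ A, g a = φ a), ∏ i, p (g i)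
      = ∑ g : Fin n → Fin n, if (∀ a ∈ A, g a = φ a) then ∏ i, p (g i) else 0 :=
        (Finset.sum_filter _ _)
    _ = ∑ g : Fin n → Fin n, ∏ i, f i (g i) := by
        exact Finset.sum_congr rfl fun g _ => (key g).symm
    _ = ∏ i, ∑ j, f i j := (Fintype.prod_sum f).symm
    _ = ∏ i, (if i ∈ A then p (φ i) else 1) := by
        refine Finset.prod_congr rfl fun i _ => ?_
        by_cases hiA : i ∈ A
        · simp only [hf, if_pos hiA]
          rw [Finset.sum_ite_eq' Finset.univ (φ i) p, if_pos (Finset.mem_univ _)]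
        · simp only [hf, if_neg hiA]
          exact hp1
    _ = ∏ a ∈ Finset.univ ∩ A, p (φ a) := Finset.prod_ite_mem _ _ _
    _ = ∏ a ∈ A, p (φ a) := by rw [Finset.univ_inter]

lemma cyl' (hp1 : ∑ i, p i = 1) {k : ℕ} (hk : 0 < k) (t : Fin k → Fin n)
    (ht : Function.Injective t) (v : Fin k → Fin n) :
    ∑ g ∈ Finset.univ.filter (fun g : Fin n → Fin n => ∀ i, g (t i) = v i), ∏ i, p (g i)
      = ∏ i, p (v i) := by
  classical
  haveI : Nonempty (Fin k) := ⟨⟨0, hk⟩⟩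
  set φ : Fin n → Fin n := fun a => v (Function.invFun t a) with hφ
  have hφt : ∀ i, φ (t i) = v i := by
    intro i
    show v (Function.invFun t (t i)) = v i
    rw [Function.leftInverse_invFun ht i]
  have hset : (Finset.univ.filter (fun g : Fin n → Fin n => ∀ i, g (t i) = v i))
      = Finset.univ.filter (fun g => ∀ a ∈ Finset.image t Finset.univ, g a = φ a) := by
    refine Finset.filter_congr fun g _ => ?_
    constructor
    · intro h a ha
      obtain ⟨i, -, rfl⟩ := Finset.mem_image.1 ha
      rw [h i, hφt i]
    · intro h i
      rw [h (t i) (Finset.mem_image_of_mem _ (Finset.mem_univ i)), hφt i]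
  rw [hset, cyl hp1, Finset.prod_image fun x _ y _ h => ht h]
  exact Finset.prod_congr rfl fun i _ => by rw [hφt i]

lemma sum_biUnion_le' {α β : Type*} [DecidableEq α] (f : α → ℝ)
    (hf : ∀ a, 0 ≤ f a) (W : Finset β) (T : β → Finset α) :
    ∑ a ∈ W.biUnion T, f a ≤ ∑ w ∈ W, ∑ a ∈ T w, f a := by
  classical
  induction W using Finset.induction with
  | empty => simp
  | insert w W hw ih =>
    rw [Finset.biUnion_insert, Finset.sum_insert hw]
    have h1 := Finset.sum_union_inter (s₁ := T w) (s₂ := W.biUnion T) (f := f)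
    have h2 : 0 ≤ ∑ a ∈ T w ∩ W.biUnion T, f a := Finset.sum_nonneg fun a _ => hf a
    linarith

lemma union_bound {α β : Type*} [DecidableEq α] (f : α → ℝ)
    (hf : ∀ a, 0 ≤ f a) (E : Finset α) {W : Finset β} {T : β → Finset α}
    (h : ∀ a ∈ E, ∃ w ∈ W, a ∈ T w) :
    ∑ a ∈ E, f a ≤ ∑ w ∈ W, ∑ a ∈ T w, f a := by
  classical
  have hsub : E ⊆ W.biUnion T := fun a ha => Finset.mem_biUnion.2 (h a ha)
  exact le_trans (Finset.sum_le_sum_of_subset_of_nonneg hsub fun a _ _ => hf a)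
    (sum_biUnion_le' f hf W T)

lemma E1bound (hp0 : ∀ i, 0 ≤ p i) (k : ℕ) :
    ∑ t ∈ Finset.univ.filter (fun t : Fin (k+1) → Fin n => Function.Injective t),
        ∏ i : Fin k, p (t i.succ)
      ≤ n * Sk p k := by
  classical
  set ψ : (Fin (k+1) → Fin n) → (Fin n) × (Fin k → Fin n) := fun t => (t 0, t ∘ Fin.succ)
    with hψ
  have hinj : Set.InjOn ψ
      ↑(Finset.univ.filter (fun t : Fin (k+1) → Fin n => Function.Injective t)) := by
    intro a _ b _ hab
    simp only [hψ, Prod.mk.injEq] at hab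
    funext i
    refine Fin.cases ?_ (fun j => ?_) i
    · exact hab.1
    · exact congrFun hab.2 j
  have himg : ∀ t ∈ Finset.univ.filter (fun t : Fin (k+1) → Fin n => Function.Injective t),
      ψ t ∈ (Finset.univ : Finset (Fin n)) ×ˢ
        (Finset.univ.filter (fun u : Fin k → Fin n => Function.Injective u)) := by
    intro t ht
    rw [Finset.mem_filter] at ht
    refine Finset.mem_product.2 ⟨Finset.mem_univ _, Finset.mem_filter.2 ⟨Finset.mem_univ _, ?_⟩⟩
    exact ht.2.comp (Fin.succ_injective k)
  calc ∑ t ∈ Finset.univ.filter (fun t : Fin (k+1) → Fin n => Function.Injective t),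
        ∏ i : Fin k, p (t i.succ)
      = ∑ x ∈ (Finset.univ.filter
            (fun t : Fin (k+1) → Fin n => Function.Injective t)).image ψ,
          ∏ i : Fin k, p (x.2 i) := by
        rw [Finset.sum_image (fun x hx y hy h => hinj hx hy h)]
        rfl
    _ ≤ ∑ x ∈ (Finset.univ : Finset (Fin n)) ×ˢ
            (Finset.univ.filter (fun u : Fin k → Fin n => Function.Injective u)),
          ∏ i : Fin k, p (x.2 i) := by
        refine Finset.sum_le_sum_of_subset_of_nonneg ?_
          (fun x _ _ => Finset.prod_nonneg fun i _ => hp0 _)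
        intro x hx
        obtain ⟨t, ht, rfl⟩ := Finset.mem_image.1 hx
        exact himg t ht
    _ = n * Sk p k := by
        rw [Finset.sum_product, Sk]
        simp [Finset.sum_const, Finset.card_univ]

lemma W2bound (hp0 : ∀ i, 0 ≤ p i) (s : ℕ) :
    ∑ w ∈ Finset.univ.filter (fun w : (Fin s → Fin n) × (Fin s → Fin n) =>
        StrictMono w.1 ∧ Function.Injective w.2 ∧ ∀ i, w.2 i ∈ Set.range w.1),
      ∏ i, p (w.2 i)
      ≤ Sk p s := by
  classical
  set W := Finset.univ.filter (fun w : (Fin s → Fin n) × (Fin s → Fin n) =>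
      StrictMono w.1 ∧ Function.Injective w.2 ∧ ∀ i, w.2 i ∈ Set.range w.1) with hW
  have himage : ∀ w ∈ W, Finset.image w.2 Finset.univ = Finset.image w.1 Finset.univ := by
    intro w hw
    simp only [hW, Finset.mem_filter] at hw
    obtain ⟨-, hmono, hinj, hrange⟩ := hw
    refine Finset.eq_of_subset_of_card_le ?_ ?_
    · intro a ha
      obtain ⟨i, -, rfl⟩ := Finset.mem_image.1 ha
      obtain ⟨j, hj⟩ := hrange i
      exact hj ▸ Finset.mem_image_of_mem _ (Finset.mem_univ j)
    · rw [Finset.card_image_of_injective _ hmono.injective,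
        Finset.card_image_of_injective _ hinj]
  have hinjW : Set.InjOn (fun w : (Fin s → Fin n) × (Fin s → Fin n) => w.2) ↑W := by
    intro a ha b hb hab
    simp only at hab
    have ha' := Finset.mem_filter.1 ha
    have hb' := Finset.mem_filter.1 hb
    obtain ⟨-, hmonoa, hinja, hrangea⟩ := ha'
    obtain ⟨-, hmonob, hinjb, hrangeb⟩ := hb'
    have hAB : Finset.image a.1 Finset.univ = Finset.image b.1 Finset.univ := by
      rw [← himage a ha, ← himage b hb, hab]
    have hcard : (Finset.image a.1 Finset.univ).card = s := by
      rw [Finset.card_image_of_injective _ hmonoa.injective, Finset.card_univ,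
        Fintype.card_fin]
    have h1 : a.1 = (Finset.image a.1 Finset.univ).orderEmbOfFin hcard :=
      Finset.orderEmbOfFin_unique hcard
        (fun x => Finset.mem_image_of_mem _ (Finset.mem_univ x)) hmonoa
    have h2 : b.1 = (Finset.image a.1 Finset.univ).orderEmbOfFin hcard :=
      Finset.orderEmbOfFin_unique hcard
        (fun x => hAB ▸ Finset.mem_image_of_mem _ (Finset.mem_univ x)) hmonob
    exact Prod.ext (h1.trans h2.symm) hab
  calc ∑ w ∈ W, ∏ i, p (w.2 i)
      = ∑ u ∈ W.image (fun w => w.2), ∏ i, p (u i) := by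
        rw [Finset.sum_image (fun x hx y hy h => hinjW hx hy h)]
    _ ≤ Sk p s := by
        rw [Sk]
        refine Finset.sum_le_sum_of_subset_of_nonneg ?_
          (fun u _ _ => Finset.prod_nonneg fun i _ => hp0 _)
        intro u hu
        obtain ⟨w, hw, rfl⟩ := Finset.mem_image.1 hu
        exact Finset.mem_filter.2 ⟨Finset.mem_univ _, (Finset.mem_filter.1 hw).2.2.1⟩


open scoped Classical

lemma cyc_iter {Q : Type*} {f : Q → Q} {s : Q} (h : IsCyclicPt f s) (k : ℕ) :
    IsCyclicPt f (f^[k] s) := by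
  obtain ⟨i, hi, hfix⟩ := h
  exact ⟨i, hi, by rw [← Function.iterate_add_apply, Nat.add_comm,
    Function.iterate_add_apply, hfix]⟩

lemma iterate_fix_mul {Q : Type*} {f : Q → Q} {a : Q} {i : ℕ} (h : f^[i] a = a) (m : ℕ) :
    f^[m*i] a = a := by
  induction m with
  | zero => simp
  | succ m ih => rw [Nat.succ_mul, Function.iterate_add_apply, h, ih]

lemma cyc_inj {Q : Type*} {f : Q → Q} {a b : Q} (ha : IsCyclicPt f a) (hb : IsCyclicPt f b)
    (h : f a = f b) : a = b := by
  obtain ⟨i, hi, hia⟩ := ha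
  obtain ⟨j, hj, hjb⟩ := hb
  have hL : 1 ≤ i * j := Nat.one_le_iff_ne_zero.2 (Nat.mul_ne_zero hi.ne' hj.ne')
  have ha' : f^[j*i] a = a := iterate_fix_mul hia j
  have hb' : f^[i*j] b = b := iterate_fix_mul hjb i
  have e : i * j = (i*j - 1) + 1 := by omega
  have ea : f^[i*j] a = f^[i*j - 1] (f a) := by
    conv_lhs => rw [e]
    rw [Function.iterate_succ_apply]
  have eb : f^[i*j] b = f^[i*j - 1] (f b) := by
    conv_lhs => rw [e]
    rw [Function.iterate_succ_apply]
  calc a = f^[j*i] a := ha'.symm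
    _ = f^[i*j] a := by rw [Nat.mul_comm]
    _ = f^[i*j - 1] (f a) := ea
    _ = f^[i*j - 1] (f b) := by rw [h]
    _ = f^[i*j] b := eb.symm
    _ = b := hb'

lemma height_witness {Q : Type*} [Fintype Q] {f : Q → Q} {k : ℕ}
    (h : k + 1 ≤ funcHeight f) :
    ∃ t : Fin (k+1) → Q, Function.Injective t ∧ ∀ i : Fin k, f (t i.castSucc) = t i.succ := by
  have hT : ∃ T, k + 1 ≤ stateHeight f T := by
    obtain ⟨T, -, hT⟩ := (Finset.le_sup_iff (Nat.succ_pos k)).1 h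
    exact ⟨T, hT⟩
  obtain ⟨T, hT⟩ := hT
  have hnotcyc : ¬ IsCyclicPt f (f^[k] T) := by
    intro hc
    have : stateHeight f T ≤ k := Nat.sInf_le hc
    omega
  refine ⟨fun i => f^[i.1] T, ?_, ?_⟩
  · intro a b hab
    by_contra hne
    have hne' : a.1 ≠ b.1 := fun h => hne (Fin.ext h)
    -- wlog a.1 < b.1
    have key : ∀ a b : Fin (k+1), a.1 < b.1 → f^[a.1] T = f^[b.1] T → False := by
      intro a b hlt heq
      have hcyc : IsCyclicPt f (f^[a.1] T) := by
        refine ⟨b.1 - a.1, by omega, ?_⟩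
        rw [← Function.iterate_add_apply]
        have : b.1 - a.1 + a.1 = b.1 := by omega
        rw [this, ← heq]
      have := cyc_iter hcyc (k - a.1)
      rw [← Function.iterate_add_apply] at this
      have hka : k - a.1 + a.1 = k := by omega
      rw [hka] at this
      exact hnotcyc this
    rcases Nat.lt_or_ge a.1 b.1 with hlt | hge
    · exact key a b hlt hab
    · exact key b a (by omega) hab.symm
  · intro i
    show f (f^[i.1] T) = f^[i.1 + 1] T
    rw [Function.iterate_succ_apply']

lemma iterates_mem {Q : Type*} {f : Q → Q} {B : Finset Q} (hinv : ∀ a ∈ B, f a ∈ B)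
    {a : Q} (ha : a ∈ B) (i : ℕ) : f^[i] a ∈ B := by
  induction i with
  | zero => simpa
  | succ i ih => rw [Function.iterate_succ_apply']; exact hinv _ ih

lemma greedy {n : ℕ} {g : Fin n → Fin n} {k : ℕ} (hk : 0 < k)
    {C : Finset (Fin n)} (hcyc : ∀ a ∈ C, IsCyclicPt g a) (hinj : Set.InjOn g ↑C)
    (hper : ∀ a ∈ C, Function.minimalPeriod g a ≤ k) :
    ∀ B : Finset (Fin n), B ⊆ C → (∀ a ∈ B, g a ∈ B) → k + 1 ≤ B.card →
      ∃ A : Finset (Fin n), A ⊆ B ∧ (∀ a ∈ A, g a ∈ A) ∧ k + 1 ≤ A.card ∧ A.card ≤ 2*k := by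
  intro B
  induction B using Finset.strongInduction with
  | _ B ih =>
    intro hBC hBinv hBcard
    by_cases hsmall : B.card ≤ 2*k
    · exact ⟨B, Finset.Subset.refl B, hBinv, hBcard, hsmall⟩
    · push_neg at hsmall
      have hne : B.Nonempty := Finset.card_pos.1 (by omega)
      obtain ⟨a, haB⟩ := hne
      have haC : a ∈ C := hBC haB
      obtain ⟨i, hi, hfix⟩ := hcyc a haC
      have hper_pos : 0 < Function.minimalPeriod g a :=
        Function.IsPeriodicPt.minimalPeriod_pos hi hfix
      set per := Function.minimalPeriod g a with hperdef
      have hfixper : g^[per] a = a := Function.iterate_minimalPeriod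
      set O := (Finset.range per).image (fun i => g^[i] a) with hO
      have hOB : O ⊆ B := by
        intro y hy
        obtain ⟨i, -, rfl⟩ := Finset.mem_image.1 hy
        exact iterates_mem hBinv haB i
      have haO : a ∈ O := Finset.mem_image.2 ⟨0, Finset.mem_range.2 hper_pos, rfl⟩
      have hOcard : O.card ≤ k :=
        le_trans Finset.card_image_le (by rw [Finset.card_range]; exact hper a haC)
      set B' := B \ O with hB'
      have hB'B : B' ⊆ B := Finset.sdiff_subset
      have hB'inv : ∀ b ∈ B', g b ∈ B' := by
        intro b hb
        obtain ⟨hbB, hbO⟩ := Finset.mem_sdiff.1 hb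
        refine Finset.mem_sdiff.2 ⟨hBinv b hbB, fun hgbO => ?_⟩
        obtain ⟨i, hi', heq⟩ := Finset.mem_image.1 hgbO
        rw [Finset.mem_range] at hi'
        have hiter : ∀ m : ℕ, g^[m+1] a = g (g^[m] a) := fun m =>
          Function.iterate_succ_apply' g m a
        cases i with
        | zero =>
          have hmem : g^[per-1] a ∈ O :=
            Finset.mem_image.2 ⟨per-1, Finset.mem_range.2 (by omega), rfl⟩
          have hgb : g b = g (g^[per-1] a) := by
            have h1 := hiter (per-1)
            have h2 : per - 1 + 1 = per := by omega
            rw [h2] at h1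
            have h3 : g b = a := by simpa using heq.symm
            rw [h3, ← h1]
            exact hfixper.symm
          have hb' : b = g^[per-1] a := hinj (hBC hbB) (hBC (hOB hmem)) hgb
          exact hbO (hb' ▸ hmem)
        | succ j =>
          have hmem : g^[j] a ∈ O := Finset.mem_image.2 ⟨j, Finset.mem_range.2 (by omega), rfl⟩
          have hgb : g b = g (g^[j] a) := by
            rw [← hiter j]
            exact heq.symm
          have hb' : b = g^[j] a := hinj (hBC hbB) (hBC (hOB hmem)) hgb
          exact hbO (hb' ▸ hmem)
      have hssub : B' ⊂ B := Finset.sdiff_ssubset hOB ⟨a, haO⟩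
      have hB'card : k + 1 ≤ B'.card := by
        rw [hB', Finset.card_sdiff_of_subset hOB]
        omega
      obtain ⟨A, hAB', hAinv, hAcard1, hAcard2⟩ :=
        ih B' hssub (hB'B.trans hBC) hB'inv hB'card
      exact ⟨A, hAB'.trans hB'B, hAinv, hAcard1, hAcard2⟩



lemma count_witness {n : ℕ} {g : Fin n → Fin n} {k : ℕ} (hk : 0 < k)
    (hC : k + 1 ≤ (Finset.univ.filter (fun s : Fin n => IsCyclicPt g s)).card) :
    (∃ t : Fin (k+1) → Fin n, Function.Injective t ∧ ∀ i : Fin k, g (t i.castSucc) = t i.succ)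
    ∨ (∃ A : Finset (Fin n), (∀ a ∈ A, g a ∈ A) ∧ Set.InjOn g ↑A ∧
        k + 1 ≤ A.card ∧ A.card ≤ 2*k) := by
  classical
  set C := Finset.univ.filter (fun s : Fin n => IsCyclicPt g s) with hCdef
  have hcyc : ∀ a ∈ C, IsCyclicPt g a := fun a ha => (Finset.mem_filter.1 ha).2
  have hinj : Set.InjOn g ↑C := by
    intro a ha b hb h
    exact cyc_inj (hcyc a (Finset.mem_coe.1 ha)) (hcyc b (Finset.mem_coe.1 hb)) h
  by_cases hbig : ∃ a ∈ C, k + 1 ≤ Function.minimalPeriod g a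
  · left
    obtain ⟨a, haC, hbigper⟩ := hbig
    have hfixper : g^[Function.minimalPeriod g a] a = a := Function.iterate_minimalPeriod
    refine ⟨fun i => g^[i.1] a, ?_, fun i => (Function.iterate_succ_apply' g i.1 a).symm⟩
    intro x y hxy
    by_contra hne
    have hne' : x.1 ≠ y.1 := fun h => hne (Fin.ext h)
    have key : ∀ x y : Fin (k+1), x.1 < y.1 → g^[x.1] a = g^[y.1] a → False := by
      intro x y hlt heq
      set per := Function.minimalPeriod g a with hper
      have hylt : y.1 < per := by have := y.2; omega
      have hfix2 : g^[per - y.1 + x.1] a = a := by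
        have h1 : g^[per - y.1] (g^[y.1] a) = a := by
          rw [← Function.iterate_add_apply]
          have h2 : per - y.1 + y.1 = per := by omega
          rw [h2, hfixper]
        rw [← heq, ← Function.iterate_add_apply] at h1
        exact h1
      have hpos : 0 < per - y.1 + x.1 := by omega
      have hlt' : per - y.1 + x.1 < per := by omega
      have hisp : Function.IsPeriodicPt g (per - y.1 + x.1) a := hfix2
      exact absurd (hisp.minimalPeriod_le hpos) (by omega)
    rcases Nat.lt_or_ge x.1 y.1 with hlt | hge
    · exact key x y hlt hxy
    · exact key y x (by omega) hxy.symm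
  · right
    push_neg at hbig
    have hper : ∀ a ∈ C, Function.minimalPeriod g a ≤ k := by
      intro a ha
      have := hbig a ha
      omega
    have hCinv : ∀ a ∈ C, g a ∈ C := by
      intro a ha
      refine Finset.mem_filter.2 ⟨Finset.mem_univ _, ?_⟩
      have := cyc_iter (hcyc a ha) 1
      simpa using this
    obtain ⟨A, hAC, hAinv, h1, h2⟩ :=
      greedy hk hcyc hinj hper C (Finset.Subset.refl C) hCinv hC
    exact ⟨A, hAinv, hinj.mono (by exact_mod_cast hAC), h1, h2⟩


lemma prod_one_sub_le_exp {n m : ℕ} (hmn : m ≤ n) (hn : 0 < n) :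
    ∏ i ∈ Finset.range m, (1 - (i:ℝ)/n) ≤ Real.exp (-(((m:ℝ) * ((m:ℝ)-1))/2)/n) := by
  have hsum : (∑ i ∈ Finset.range m, (i:ℝ)) = ((m:ℝ) * ((m:ℝ)-1))/2 := by
    have h2 := Finset.sum_range_id_mul_two m
    rcases Nat.eq_zero_or_pos m with h0 | hpos
    · subst h0; simp
    · have h3 : ((m * (m-1) : ℕ) : ℝ) = (m:ℝ) * ((m:ℝ) - 1) := by
        push_cast [Nat.cast_sub hpos]
        ring
      have h4 : ((∑ i ∈ Finset.range m, i : ℕ) : ℝ) * 2 = (m:ℝ) * ((m:ℝ) - 1) := by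
        rw [← h3]
        exact_mod_cast congrArg (Nat.cast : ℕ → ℝ) h2
      push_cast at h4
      linarith
  have step : ∏ i ∈ Finset.range m, (1 - (i:ℝ)/n)
      ≤ ∏ i ∈ Finset.range m, Real.exp (-((i:ℝ)/n)) := by
    refine Finset.prod_le_prod (fun i hi => ?_) (fun i hi => ?_)
    · rw [sub_nonneg, div_le_one (by exact_mod_cast hn)]
      exact_mod_cast le_trans (Finset.mem_range.1 hi).le hmn
    · have h := Real.add_one_le_exp (-((i:ℝ)/n))
      linarith
  have hsum2 : (∑ i ∈ Finset.range m, (-((i:ℝ)/n))) = -(((m:ℝ) * ((m:ℝ)-1))/2)/n := by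
    have h1 : ∀ i ∈ Finset.range m, (-((i:ℝ)/n)) = (-(1:ℝ)/n) * i := fun i _ => by ring
    rw [Finset.sum_congr rfl h1, ← Finset.mul_sum, hsum]
    ring
  calc ∏ i ∈ Finset.range m, (1 - (i:ℝ)/n)
      ≤ ∏ i ∈ Finset.range m, Real.exp (-((i:ℝ)/n)) := step
    _ = Real.exp (∑ i ∈ Finset.range m, (-((i:ℝ)/n))) := (Real.exp_sum _ _).symm
    _ = Real.exp (-(((m:ℝ) * ((m:ℝ)-1))/2)/n) := by rw [hsum2]

lemma exp_bound_final {n m : ℕ} (hn : 2 ≤ n) (hmn : m ≤ n)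
    (hxm : 2 * Real.sqrt ((n:ℝ) * Real.log n) - 1 < m) (hm2 : 2 ≤ m) :
    Real.exp (-(((m:ℝ) * ((m:ℝ)-1))/2)/n) ≤ Real.exp 3 / (n:ℝ)^2 := by
  have hn0 : (0:ℝ) < n := by positivity
  have hn1 : (1:ℝ) < n := by exact_mod_cast hn
  have hlog : 0 < Real.log n := Real.log_pos hn1
  have hlogn : Real.log n ≤ n := le_trans (Real.log_le_sub_one_of_pos hn0) (by linarith)
  set x : ℝ := 2 * Real.sqrt ((n:ℝ) * Real.log n) with hxdef
  have hx2 : x^2 = 4 * ((n:ℝ) * Real.log n) := by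
    rw [hxdef, mul_pow, Real.sq_sqrt (by positivity)]
    ring
  have hxle : x ≤ 2*n := by
    rw [hxdef]
    have h := Real.sqrt_le_sqrt (show (n:ℝ) * Real.log n ≤ (n:ℝ)*(n:ℝ) by nlinarith)
    rw [Real.sqrt_mul_self hn0.le] at h
    linarith
  have hxpos : 0 < x := by rw [hxdef]; positivity
  have hm1 : (1:ℝ) ≤ (m:ℝ) - 1 := by
    have : (2:ℝ) ≤ m := by exact_mod_cast hm2
    linarith
  have key : 2 * Real.log n - 3 ≤ ((m:ℝ) * ((m:ℝ)-1))/2/n := by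
    have hq : x^2 - 3*x ≤ (m:ℝ) * ((m:ℝ)-1) := by nlinarith [hxm, hm1, hxpos]
    rw [div_div, le_div_iff₀ (by positivity : (0:ℝ) < 2*n)]
    nlinarith
  have harg : -(((m:ℝ) * ((m:ℝ)-1))/2)/n ≤ -(2*Real.log n - 3) := by
    have he : -(((m:ℝ)*((m:ℝ)-1))/2)/n = -(((m:ℝ)*((m:ℝ)-1))/2/n) := by ring
    rw [he]
    exact neg_le_neg key
  calc Real.exp (-(((m:ℝ) * ((m:ℝ)-1))/2)/n)
      ≤ Real.exp (-(2*Real.log n - 3)) := Real.exp_le_exp.2 harg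
    _ = Real.exp 3 / (n:ℝ)^2 := by
        rw [show -(2*Real.log (n:ℝ) - 3) = 3 - 2*Real.log n by ring, Real.exp_sub]
        congr 1
        rw [show (2:ℝ)*Real.log n = Real.log n + Real.log n by ring, Real.exp_add,
          Real.exp_log hn0]
        ring

lemma const_bound {n m : ℕ} (hn : 2 ≤ n) (hmn : m ≤ n) :
    ((n:ℝ) + m) * (Real.exp 3 / (n:ℝ)^2) ≤ (41:ℝ) / n := by
  have hn0 : (0:ℝ) < n := by positivity
  have hmn' : (m:ℝ) ≤ n := by exact_mod_cast hmn
  have hexp : Real.exp 3 ≤ 20.5 := by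
    have h1 : Real.exp 1 < 2.7182818286 := Real.exp_one_lt_d9
    have h3 : Real.exp 3 = (Real.exp 1)^3 := by
      rw [← Real.exp_nat_mul]
      norm_num
    have h0 : (0:ℝ) ≤ Real.exp 1 := (Real.exp_pos 1).le
    calc Real.exp 3 = (Real.exp 1)^3 := h3
      _ ≤ (2.7182818286:ℝ)^3 := pow_le_pow_left₀ h0 h1.le 3
      _ ≤ 20.5 := by norm_num
  have h2n : ((n:ℝ) + m) ≤ 2*n := by linarith
  calc ((n:ℝ) + m) * (Real.exp 3 / (n:ℝ)^2)
      ≤ (2*(n:ℝ)) * (20.5 / (n:ℝ)^2) := by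
        refine mul_le_mul h2n ?_ (by positivity) (by positivity)
        gcongr
    _ = (41:ℝ) / n := by
        field_simp
        ring

noncomputable def E1set (n m : ℕ) : Finset (Fin n → Fin n) :=
  Finset.univ.filter (fun g => ∃ t : Fin (m+1) → Fin n,
    Function.Injective t ∧ ∀ i : Fin m, g (t i.castSucc) = t i.succ)

lemma mem_E1set {n m : ℕ} {g : Fin n → Fin n} :
    g ∈ E1set n m ↔ ∃ t : Fin (m+1) → Fin n,
      Function.Injective t ∧ ∀ i : Fin m, g (t i.castSucc) = t i.succ := by
  rw [E1set, Finset.mem_filter]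
  exact ⟨fun h => h.2, fun h => ⟨Finset.mem_univ _, h⟩⟩

noncomputable def E2set (n s : ℕ) : Finset (Fin n → Fin n) :=
  Finset.univ.filter (fun g => ∃ w : (Fin s → Fin n) × (Fin s → Fin n),
    (StrictMono w.1 ∧ Function.Injective w.2 ∧ ∀ i, w.2 i ∈ Set.range w.1) ∧
    ∀ i, g (w.1 i) = w.2 i)

lemma mem_E2set {n s : ℕ} {g : Fin n → Fin n} :
    g ∈ E2set n s ↔ ∃ w : (Fin s → Fin n) × (Fin s → Fin n),
      (StrictMono w.1 ∧ Function.Injective w.2 ∧ ∀ i, w.2 i ∈ Set.range w.1) ∧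
      ∀ i, g (w.1 i) = w.2 i := by
  rw [E2set, Finset.mem_filter]
  exact ⟨fun h => h.2, fun h => ⟨Finset.mem_univ _, h⟩⟩

lemma E1set_bound (hp0 : ∀ i, 0 ≤ p i) (hp1 : ∑ i, p i = 1) {m : ℕ} (hm : 0 < m) :
    ∑ g ∈ E1set n m, ∏ i, p (g i) ≤ (n:ℝ) * Sk p m := by
  classical
  have hnonneg : ∀ g : Fin n → Fin n, 0 ≤ ∏ i, p (g i) :=
    fun g => Finset.prod_nonneg fun i _ => hp0 _
  have hub := union_bound (fun g : Fin n → Fin n => ∏ i, p (g i)) hnonneg (E1set n m)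
    (W := Finset.univ.filter (fun t : Fin (m+1) → Fin n => Function.Injective t))
    (T := fun t => Finset.univ.filter
      (fun g : Fin n → Fin n => ∀ i : Fin m, g (t i.castSucc) = t i.succ))
    (by
      intro g hg
      obtain ⟨t, ht1, ht2⟩ := mem_E1set.1 hg
      exact ⟨t, Finset.mem_filter.2 ⟨Finset.mem_univ _, ht1⟩,
        Finset.mem_filter.2 ⟨Finset.mem_univ _, ht2⟩⟩)
  refine le_trans hub (le_trans ?_ (E1bound hp0 m))
  refine Finset.sum_le_sum fun t ht => ?_
  have ht1 : Function.Injective t := (Finset.mem_filter.1 ht).2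
  exact le_of_eq (cyl' hp1 hm (fun i => t i.castSucc)
    (ht1.comp (Fin.castSucc_injective m)) (fun i => t i.succ))

lemma E2set_bound (hp0 : ∀ i, 0 ≤ p i) (hp1 : ∑ i, p i = 1) {s : ℕ} (hs : 0 < s) :
    ∑ g ∈ E2set n s, ∏ i, p (g i) ≤ Sk p s := by
  classical
  have hnonneg : ∀ g : Fin n → Fin n, 0 ≤ ∏ i, p (g i) :=
    fun g => Finset.prod_nonneg fun i _ => hp0 _
  have hub := union_bound (fun g : Fin n → Fin n => ∏ i, p (g i)) hnonneg (E2set n s)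
    (W := Finset.univ.filter (fun w : (Fin s → Fin n) × (Fin s → Fin n) =>
      StrictMono w.1 ∧ Function.Injective w.2 ∧ ∀ i, w.2 i ∈ Set.range w.1))
    (T := fun w : (Fin s → Fin n) × (Fin s → Fin n) =>
      Finset.univ.filter (fun g : Fin n → Fin n => ∀ i, g (w.1 i) = w.2 i))
    (by
      intro g hg
      obtain ⟨w, hw1, hw2⟩ := mem_E2set.1 hg
      exact ⟨w, Finset.mem_filter.2 ⟨Finset.mem_univ _, hw1⟩,
        Finset.mem_filter.2 ⟨Finset.mem_univ _, hw2⟩⟩)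
  refine le_trans hub (le_trans ?_ (W2bound hp0 s))
  refine Finset.sum_le_sum fun w hw => ?_
  have hw1 := (Finset.mem_filter.1 hw).2
  exact le_of_eq (cyl' hp1 hs w.1 hw1.1.injective w.2)

end RPM

open Classical in
/-- There is a constant `K > 0` such that for every `n ≥ 2` and every probability
mass function `p` on `Fin n`, a random `p`-mapping `g : Fin n → Fin n` (whose values
`g i` are chosen independently with distribution `p`, so that the probability of any
outcome `g` is `∏ i, p (g i)`) has more than `2√(n log n)` cyclic points or has
height greater than `2√(n log n)` with probability at most `K / n`. -/
theorem random_p_mapping_cyclic_points_and_height :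
    ∃ K : ℝ, 0 < K ∧
      ∀ n : ℕ, 2 ≤ n → ∀ p : Fin n → ℝ, (∀ i, 0 ≤ p i) → (∑ i, p i) = 1 →
        ∑ g ∈ Finset.univ.filter (fun g : Fin n → Fin n =>
            2 * Real.sqrt (n * Real.log n) < ({s : Fin n | IsCyclicPt g s}.ncard : ℝ) ∨
            2 * Real.sqrt (n * Real.log n) < (funcHeight g : ℝ)),
          ∏ i, p (g i) ≤ K / n := by
  refine ⟨41, by norm_num, ?_⟩
  intro n hn p hp0 hp1
  have hn0 : (0:ℝ) < n := by
    have h : (0:ℕ) < n := by omega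
    exact_mod_cast h
  have hn1 : (1:ℝ) < n := by exact_mod_cast hn
  have hlog : 0 < Real.log n := Real.log_pos hn1
  set x : ℝ := 2 * Real.sqrt ((n:ℝ) * Real.log n) with hxdef
  have hxpos : 0 < x := by rw [hxdef]; positivity
  have hx2 : 2 < x := by
    rw [hxdef]
    have hgt : (1:ℝ) < (n:ℝ) * Real.log n := by
      have hl4 : (1:ℝ) < Real.log 4 := by
        have he : Real.exp 1 < 4 := lt_trans Real.exp_one_lt_d9 (by norm_num)
        calc (1:ℝ) = Real.log (Real.exp 1) := (Real.log_exp 1).symm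
          _ < Real.log 4 := Real.log_lt_log (Real.exp_pos 1) he
      have hl2 : Real.log 4 = 2 * Real.log 2 := by
        rw [show (4:ℝ) = 2^2 by norm_num, Real.log_pow]
        push_cast; ring
      have hlogn2 : Real.log 2 ≤ Real.log n :=
        Real.log_le_log (by norm_num) (by exact_mod_cast hn)
      have hn2 : (2:ℝ) ≤ n := by exact_mod_cast hn
      have hlog2pos : 0 < Real.log 2 := Real.log_pos (by norm_num)
      nlinarith
    have h1 : (1:ℝ) < Real.sqrt ((n:ℝ) * Real.log n) := by
      calc (1:ℝ) = Real.sqrt 1 := Real.sqrt_one.symm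
        _ < Real.sqrt ((n:ℝ) * Real.log n) := Real.sqrt_lt_sqrt zero_le_one hgt
    linarith
  set m : ℕ := Nat.floor x with hmdef
  have hm2 : 2 ≤ m := Nat.le_floor (by exact_mod_cast hx2.le)
  have hm0 : 0 < m := by omega
  have hmx1 : x - 1 < m := by
    have h := Nat.lt_floor_add_one x
    rw [← hmdef] at h
    linarith
  have hnonneg : ∀ g : Fin n → Fin n, 0 ≤ ∏ i, p (g i) :=
    fun g => Finset.prod_nonneg fun i _ => hp0 _
  -- inclusion of the main event into the union of witnessed events
  have hincl : Finset.univ.filter (fun g : Fin n → Fin n =>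
      2 * Real.sqrt (n * Real.log n) < ({s : Fin n | IsCyclicPt g s}.ncard : ℝ) ∨
      2 * Real.sqrt (n * Real.log n) < (funcHeight g : ℝ))
      ⊆ RPM.E1set n m ∪ (Finset.Icc (m+1) (2*m)).biUnion (fun s => RPM.E2set n s) := by
    intro g hg
    rw [Finset.mem_filter] at hg
    rcases hg.2 with hcount | hheight
    · have hset : {s : Fin n | IsCyclicPt g s}
          = ↑(Finset.univ.filter (fun s : Fin n => IsCyclicPt g s)) := by
        ext s; simp
      rw [hset, Set.ncard_coe_finset] at hcount
      have hcard : m + 1 ≤ (Finset.univ.filter (fun s : Fin n => IsCyclicPt g s)).card := by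
        have h := (Nat.floor_lt hxpos.le).2 hcount
        omega
      rcases RPM.count_witness hm0 hcard with ⟨t, ht1, ht2⟩ | ⟨A, hAinv, hAinj, hA1, hA2⟩
      · exact Finset.mem_union_left _ (RPM.mem_E1set.2 ⟨t, ht1, ht2⟩)
      · refine Finset.mem_union_right _ (Finset.mem_biUnion.2 ⟨A.card,
          Finset.mem_Icc.2 ⟨hA1, hA2⟩, ?_⟩)
        set t : Fin A.card → Fin n := ⇑(A.orderEmbOfFin rfl) with htdef
        have htmem : ∀ i, t i ∈ A := fun i => Finset.orderEmbOfFin_mem A rfl i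
        have htrange : Set.range t = ↑A := Finset.range_orderEmbOfFin A rfl
        refine RPM.mem_E2set.2 ⟨(t, fun i => g (t i)),
          ⟨(A.orderEmbOfFin rfl).strictMono, ?_, ?_⟩, fun i => rfl⟩
        · intro a b hab
          have h1 : t a = t b := hAinj (htmem a) (htmem b) hab
          exact (A.orderEmbOfFin rfl).injective h1
        · intro i
          rw [htrange]
          exact hAinv (t i) (htmem i)
    · have hfh : m + 1 ≤ funcHeight g := by
        have h := (Nat.floor_lt hxpos.le).2 hheight
        omega
      obtain ⟨t, ht1, ht2⟩ := RPM.height_witness hfh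
      exact Finset.mem_union_left _ (RPM.mem_E1set.2 ⟨t, ht1, ht2⟩)
  -- convert to F := m! * Ek p m
  set F : ℝ := ((m.factorial : ℕ) : ℝ) * RPM.Ek p m with hF
  have hFnonneg : 0 ≤ F := by
    rw [hF]
    have h := RPM.Ek_nonneg (p := p) hp0 m
    positivity
  have hSkm : RPM.Sk p m ≤ F := RPM.Sk_le hp0 m
  have hSks : ∀ s ∈ Finset.Icc (m+1) (2*m), RPM.Sk p s ≤ F := by
    intro s hs
    refine le_trans (RPM.Sk_le hp0 s) ?_
    exact RPM.fact_Ek_anti hp0 hp1 (le_trans (by omega) (Finset.mem_Icc.1 hs).1)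
  have hcardIcc : (Finset.Icc (m+1) (2*m)).card = m := by
    rw [Nat.card_Icc]
    omega
  have htot : ∑ g ∈ Finset.univ.filter (fun g : Fin n → Fin n =>
      2 * Real.sqrt (n * Real.log n) < ({s : Fin n | IsCyclicPt g s}.ncard : ℝ) ∨
      2 * Real.sqrt (n * Real.log n) < (funcHeight g : ℝ)), ∏ i, p (g i)
      ≤ ((n:ℝ) + m) * F := by
    have h1 : ∑ g ∈ Finset.univ.filter (fun g : Fin n → Fin n =>
        2 * Real.sqrt (n * Real.log n) < ({s : Fin n | IsCyclicPt g s}.ncard : ℝ) ∨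
        2 * Real.sqrt (n * Real.log n) < (funcHeight g : ℝ)), ∏ i, p (g i)
        ≤ ∑ g ∈ RPM.E1set n m ∪ (Finset.Icc (m+1) (2*m)).biUnion (fun s => RPM.E2set n s),
            ∏ i, p (g i) :=
      Finset.sum_le_sum_of_subset_of_nonneg hincl (fun g _ _ => hnonneg g)
    have h2 := Finset.sum_union_inter (s₁ := RPM.E1set n m)
      (s₂ := (Finset.Icc (m+1) (2*m)).biUnion (fun s => RPM.E2set n s))
      (f := fun g : Fin n → Fin n => ∏ i, p (g i))
    have h3 : 0 ≤ ∑ g ∈ RPM.E1set n m ∩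
        (Finset.Icc (m+1) (2*m)).biUnion (fun s => RPM.E2set n s), ∏ i, p (g i) :=
      Finset.sum_nonneg fun g _ => hnonneg g
    have hbE1 : ∑ g ∈ RPM.E1set n m, ∏ i, p (g i) ≤ (n:ℝ) * RPM.Sk p m :=
      RPM.E1set_bound hp0 hp1 hm0
    have hbE2 : ∑ g ∈ (Finset.Icc (m+1) (2*m)).biUnion (fun s => RPM.E2set n s),
        ∏ i, p (g i) ≤ (m:ℝ) * F := by
      refine le_trans (RPM.sum_biUnion_le' _ hnonneg _ _) ?_
      calc ∑ s ∈ Finset.Icc (m+1) (2*m), ∑ g ∈ RPM.E2set n s, ∏ i, p (g i)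
          ≤ ∑ s ∈ Finset.Icc (m+1) (2*m), F := by
            refine Finset.sum_le_sum fun s hs => ?_
            have hspos : 0 < s := by
              have h := (Finset.mem_Icc.1 hs).1
              omega
            exact le_trans (RPM.E2set_bound hp0 hp1 hspos) (hSks s hs)
        _ = (m:ℝ) * F := by
            rw [Finset.sum_const, hcardIcc, nsmul_eq_mul]
    have h5 : (n:ℝ) * RPM.Sk p m ≤ (n:ℝ) * F :=
      mul_le_mul_of_nonneg_left hSkm hn0.le
    have expand : ((n:ℝ) + m) * F = (n:ℝ) * F + (m:ℝ) * F := by ring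
    rw [expand]
    linarith
  rcases le_or_gt m n with hmn | hnm
  · -- main numeric case
    have hmac := RPM.maclaurin hp0 hp1 m hmn
    have hprod := RPM.prod_one_sub_le_exp (n := n) (m := m) hmn (by omega)
    have hexp := RPM.exp_bound_final hn hmn (by rw [← hxdef]; exact hmx1) hm2
    have hFle : F ≤ Real.exp 3 / (n:ℝ)^2 := le_trans hmac (le_trans hprod hexp)
    have hnm0 : (0:ℝ) ≤ (n:ℝ) + m := by positivity
    calc ∑ g ∈ Finset.univ.filter (fun g : Fin n → Fin n =>
          2 * Real.sqrt (n * Real.log n) < ({s : Fin n | IsCyclicPt g s}.ncard : ℝ) ∨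
          2 * Real.sqrt (n * Real.log n) < (funcHeight g : ℝ)), ∏ i, p (g i)
        ≤ ((n:ℝ) + m) * F := htot
      _ ≤ ((n:ℝ) + m) * (Real.exp 3 / (n:ℝ)^2) := mul_le_mul_of_nonneg_left hFle hnm0
      _ ≤ (41:ℝ) / n := RPM.const_bound hn hmn
  · -- degenerate case: m > n, the bound F is zero
    have hEk0 : RPM.Ek p m = 0 := by
      rw [RPM.Ek]
      have hcard : (Finset.univ : Finset (Fin n)).card < m := by
        rw [Finset.card_univ, Fintype.card_fin]
        exact hnm
      rw [Finset.powersetCard_eq_empty.2 hcard]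
      simp
    have hF0 : F = 0 := by rw [hF, hEk0, mul_zero]
    refine le_trans htot ?_
    rw [hF0, mul_zero]
    positivity
end

section
/- Let Q be a finite set with |Q| = n ≥ 2, and let a, b, c : Q → Q be functions with b and c bijective. Let h, m, L be natural numbers with m ≥ 1, and suppose: (i) the image of the h-fold iterate a^[h] has cardinality at most m; (ii) there exist distinct states P₁, P₂ ∈ Q with a(P₁) = a(P₂); (iii) for every ordered pair (S₁, S₂) of distinct states of Q there exists a word w over the two letters b, c of length at most L whose action maps S₁ to P₁ and S₂ to P₂. Then the automaton on state set Q with alphabet {a, b, c} is synchronizing, and it has a synchronizing word of length at most h + (m − 1)·(L + 1). -/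
/-- The action of a word (a list of letters, each acting as a function on the
state set), applied in order: the first letter of the list acts first. -/
def wordAction {Q : Type*} (w : List (Q → Q)) (q : Q) : Q :=
  w.foldl (fun s f => f s) q

/-- A word is synchronizing if its action sends every state to one common state. -/
def IsSyncWord {Q : Type*} (w : List (Q → Q)) : Prop :=
  ∃ S : Q, ∀ T : Q, wordAction w T = S

lemma wordAction_append {Q : Type*} (w₁ w₂ : List (Q → Q)) (q : Q) :
    wordAction (w₁ ++ w₂) q = wordAction w₂ (wordAction w₁ q) := by
  simp [wordAction, List.foldl_append]

lemma wordAction_replicate {Q : Type*} (a : Q → Q) (h : ℕ) (q : Q) :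
    wordAction (List.replicate h a) q = a^[h] q := by
  induction h generalizing q with
  | zero => simp [wordAction]
  | succ k ih =>
    rw [List.replicate_succ]
    show wordAction (List.replicate k a) (a q) = _
    rw [ih, Function.iterate_succ_apply]

lemma aux_ext {Q : Type*} [Fintype Q] [Nonempty Q]
    (a b c : Q → Q) (L : ℕ) (P₁ P₂ : Q) (hP : P₁ ≠ P₂) (ha : a P₁ = a P₂)
    (hmap : ∀ S₁ S₂ : Q, S₁ ≠ S₂ →
      ∃ w : List (Q → Q), (∀ f ∈ w, f = b ∨ f = c) ∧ w.length ≤ L ∧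
        wordAction w S₁ = P₁ ∧ wordAction w S₂ = P₂) :
    ∀ k (w : List (Q → Q)), (∀ f ∈ w, f = a ∨ f = b ∨ f = c) →
      (Set.range (wordAction w)).ncard ≤ k + 1 →
      ∃ w' : List (Q → Q), (∀ f ∈ w', f = a ∨ f = b ∨ f = c) ∧
        w'.length ≤ w.length + k * (L + 1) ∧ IsSyncWord w' := by
  intro k
  induction k with
  | zero =>
    intro w hw hcard
    refine ⟨w, hw, by simp, ?_⟩
    obtain ⟨q⟩ := ‹Nonempty Q›
    refine ⟨wordAction w q, fun T => ?_⟩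
    have hfin : (Set.range (wordAction w)).Finite := Set.toFinite _
    exact (Set.ncard_le_one hfin).mp hcard _ (Set.mem_range_self T) _ (Set.mem_range_self q)
  | succ k ih =>
    intro w hw hcard
    by_cases hle : (Set.range (wordAction w)).ncard ≤ k + 1
    · obtain ⟨w', hw', hl, hs⟩ := ih w hw hle
      exact ⟨w', hw', hl.trans (by nlinarith), hs⟩
    · have h2 : 1 < (Set.range (wordAction w)).ncard := by omega
      obtain ⟨S₁, S₂, hS₁, hS₂, hne⟩ := (Set.one_lt_ncard_iff (Set.toFinite _)).mp h2
      obtain ⟨u, hu, hulen, hu1, hu2⟩ := hmap S₁ S₂ hne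
      set g : Q → Q := fun t => a (wordAction u t) with hg
      have hact : ∀ q, wordAction (w ++ (u ++ [a])) q = g (wordAction w q) := by
        intro q
        rw [wordAction_append, wordAction_append]
        rfl
      have hrange : Set.range (wordAction (w ++ (u ++ [a]))) =
          g '' Set.range (wordAction w) := by
        ext x
        constructor
        · rintro ⟨q, rfl⟩; exact ⟨wordAction w q, ⟨q, rfl⟩, (hact q).symm⟩
        · rintro ⟨y, ⟨q, rfl⟩, rfl⟩; exact ⟨q, hact q⟩
      have hgS : g S₁ = g S₂ := by simp [hg, hu1, hu2, ha]
      -- image drops cardinality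
      have himg : g '' Set.range (wordAction w) =
          g '' (Set.range (wordAction w) \ {S₂}) := by
        apply Set.Subset.antisymm
        · rintro x ⟨y, hy, rfl⟩
          by_cases hyS : y = S₂
          · exact ⟨S₁, ⟨hS₁, by simpa using hne⟩, by rw [hgS, hyS]⟩
          · exact ⟨y, ⟨hy, hyS⟩, rfl⟩
        · exact Set.image_mono (Set.diff_subset)
      have hcard' : (Set.range (wordAction (w ++ (u ++ [a])))).ncard ≤ k + 1 := by
        rw [hrange, himg]
        calc (g '' (Set.range (wordAction w) \ {S₂})).ncard
            ≤ (Set.range (wordAction w) \ {S₂}).ncard := Set.ncard_image_le (Set.toFinite _)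
          _ = (Set.range (wordAction w)).ncard - 1 :=
              Set.ncard_diff_singleton_of_mem hS₂
          _ ≤ k + 1 := by omega
      have hw' : ∀ f ∈ w ++ (u ++ [a]), f = a ∨ f = b ∨ f = c := by
        intro f hf
        rcases List.mem_append.mp hf with hf | hf
        · exact hw f hf
        rcases List.mem_append.mp hf with hf | hf
        · rcases hu f hf with h | h
          · exact Or.inr (Or.inl h)
          · exact Or.inr (Or.inr h)
        · simp at hf; exact Or.inl hf
      obtain ⟨w', hw'', hl, hs⟩ := ih (w ++ (u ++ [a])) hw' hcard'
      refine ⟨w', hw'', ?_, hs⟩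
      have : (w ++ (u ++ [a])).length ≤ w.length + (L + 1) := by
        simp; omega
      calc w'.length ≤ (w ++ (u ++ [a])).length + k * (L + 1) := hl
        _ ≤ w.length + (L + 1) + k * (L + 1) := by omega
        _ = w.length + (k + 1) * (L + 1) := by ring

/-- Let `Q` be a finite set with `|Q| = n ≥ 2` and `a, b, c : Q → Q` with `b, c`
bijective. Suppose `h, m, L : ℕ` with `m ≥ 1` satisfy: (i) the image of `a^[h]` has
at most `m` elements; (ii) there are distinct states `P₁ ≠ P₂` merged by `a`, such
that (iii) every ordered pair of distinct states can be mapped to `(P₁, P₂)` by a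
word over the letters `b, c` of length at most `L`. Then the automaton with alphabet
`{a, b, c}` is synchronizing with a synchronizing word of length at most
`h + (m - 1) * (L + 1)`. -/
theorem synchronization_from_merging_pair
    (Q : Type*) [Fintype Q] (n : ℕ) (hcard : Nat.card Q = n) (hn : 2 ≤ n)
    (a b c : Q → Q) (hb : Function.Bijective b) (hc : Function.Bijective c)
    (h m L : ℕ) (hm : 1 ≤ m)
    (himg : (Set.range (a^[h])).ncard ≤ m)
    (hpair : ∃ P₁ P₂ : Q, P₁ ≠ P₂ ∧ a P₁ = a P₂ ∧
      ∀ S₁ S₂ : Q, S₁ ≠ S₂ →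
        ∃ w : List (Q → Q), (∀ f ∈ w, f = b ∨ f = c) ∧ w.length ≤ L ∧
          wordAction w S₁ = P₁ ∧ wordAction w S₂ = P₂) :
    ∃ w : List (Q → Q), (∀ f ∈ w, f = a ∨ f = b ∨ f = c) ∧
      w.length ≤ h + (m - 1) * (L + 1) ∧ IsSyncWord w := by
  have hne : Nonempty Q := by
    have : 0 < Nat.card Q := by omega
    exact Nat.card_pos_iff.mp this |>.1
  obtain ⟨P₁, P₂, hP, ha, hmap⟩ := hpair
  have hact : wordAction (List.replicate h a) = a^[h] := by
    funext q; exact wordAction_replicate a h q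
  have hcard0 : (Set.range (wordAction (List.replicate h a))).ncard ≤ (m - 1) + 1 := by
    rw [hact]; omega
  obtain ⟨w', hw', hl, hs⟩ := aux_ext a b c L P₁ P₂ hP ha hmap (m - 1)
    (List.replicate h a) (fun f hf => Or.inl (List.eq_of_mem_replicate hf)) hcard0
  refine ⟨w', hw', ?_, hs⟩
  simpa [List.length_replicate] using hl
end
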